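/- Main equality: Under the same setting as the main inequality, if additionally the optimal regularized policy π*_Ω(s,·) lies in the relative interior of Δ(A) for every state s (all action probabilities strictly positive), then for any policy π: E_{s∼μ^π}[ D_Ω(π(s,·), π*_Ω(s,·)) ] = (1−γ)·E_{s∼ρ}[ V_Ω^⋆(s) − V_Ω^π(s) ]. -/

import Mathlib

/-- Main equality: in a finite regularized MDP with continuously differentiable
strictly convex regularizer `Ω` and optimal regularized policy `π⋆`, for any policy `π`,
if additionally `π⋆(s,·)` lies in the relative interior of the simplex for every `s`,
`E_{s∼μ^π}[D_Ω(π(s,·), π⋆(s,·))] = (1−γ)·E_{s∼ρ}[V_Ω^⋆(s) − V_Ω^π(s)]`. -/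
theorem regularized_mdp_main_equality
    {S A : Type*} [Fintype S] [Fintype A]
    (P : S → A → S → ℝ) (hP0 : ∀ s a s', 0 ≤ P s a s') (hP1 : ∀ s a, ∑ s', P s a s' = 1)
    (r : S → A → ℝ) (ρ : S → ℝ) (hρ : ρ ∈ stdSimplex ℝ S)
    (γ : ℝ) (hγ0 : 0 ≤ γ) (hγ1 : γ < 1)
    (Ω : (A → ℝ) → ℝ) (hΩdiff : ContDiff ℝ 1 Ω)
    (hΩconv : StrictConvexOn ℝ (stdSimplex ℝ A) Ω)
    -- optimal regularized value functions and optimal policy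
    (Qstar : S → A → ℝ) (Vstar : S → ℝ) (πstar : S → A → ℝ)
    (hπstar : ∀ s, πstar s ∈ stdSimplex ℝ A)
    (hπstar_pos : ∀ s a, 0 < πstar s a)
    (hQstar : ∀ s a, Qstar s a = r s a + γ * ∑ s', P s a s' * Vstar s')
    (hVstar : ∀ s, Vstar s = ∑ a, πstar s a * Qstar s a - Ω (πstar s))
    (hmax : ∀ s, ∀ p ∈ stdSimplex ℝ A,
      ∑ a, p a * Qstar s a - Ω p ≤ ∑ a, πstar s a * Qstar s a - Ω (πstar s))
    -- an arbitrary policy `π` with its regularized value functions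
    (π : S → A → ℝ) (hπ : ∀ s, π s ∈ stdSimplex ℝ A)
    (Qπ : S → A → ℝ) (Vπ : S → ℝ)
    (hQπ : ∀ s a, Qπ s a = r s a + γ * ∑ s', P s a s' * Vπ s')
    (hVπ : ∀ s, Vπ s = ∑ a, π s a * Qπ s a - Ω (π s))
    -- discounted stationary distribution of `π`
    (μ : S → ℝ)
    (hμ : ∀ s', μ s' = (1 - γ) * ρ s' + γ * ∑ s, (∑ a, P s a s' * π s a) * μ s) :
    ∑ s, μ s * (Ω (π s) - Ω (πstar s) - fderiv ℝ Ω (πstar s) (π s - πstar s))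
      = (1 - γ) * ∑ s, ρ s * (Vstar s - Vπ s) := by
  classical
  have hΩd : Differentiable ℝ Ω := hΩdiff.differentiable one_ne_zero
  set δ : S → ℝ := fun s => Vstar s - Vπ s with hδ
  -- Step 1: first-order condition at the interior maximizer
  have key : ∀ s, fderiv ℝ Ω (πstar s) (π s - πstar s)
      = ∑ a, (π s a - πstar s a) * Qstar s a := by
    intro s
    set v : A → ℝ := π s - πstar s with hv
    have hsumv : ∑ a, v a = 0 := by
      have h1 := (hπ s).2
      have h2 := (hπstar s).2
      simp [hv, Pi.sub_apply, Finset.sum_sub_distrib, h1, h2]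
    have hmem : ∀ᶠ t in nhds (0:ℝ), (πstar s + t • v) ∈ stdSimplex ℝ A := by
      have hpos : ∀ᶠ t in nhds (0:ℝ), ∀ a, 0 < πstar s a + t * v a := by
        rw [Filter.eventually_all]
        intro a
        have hc : ContinuousAt (fun t : ℝ => πstar s a + t * v a) 0 := by
          fun_prop
        have h0 : (0:ℝ) < πstar s a + 0 * v a := by simpa using hπstar_pos s a
        exact hc.eventually (eventually_gt_nhds h0)
      filter_upwards [hpos] with t ht
      constructor
      · intro a
        have := ht a
        simpa [Pi.add_apply, Pi.smul_apply, smul_eq_mul] using this.le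
      · have : ∑ a, (πstar s a + t * v a) = 1 := by
          rw [Finset.sum_add_distrib, (hπstar s).2, ← Finset.mul_sum, hsumv]
          ring
        simpa [Pi.add_apply, Pi.smul_apply, smul_eq_mul] using this
    set g : ℝ → ℝ :=
      fun t => ∑ a, (πstar s a + t * v a) * Qstar s a - Ω (πstar s + t • v) with hg
    have hlocmax : IsLocalMax g 0 := by
      filter_upwards [hmem] with t ht
      have := hmax s _ ht
      simpa [hg, Pi.add_apply, Pi.smul_apply, smul_eq_mul] using this
    have hd1 : HasDerivAt (fun t : ℝ => ∑ a, (πstar s a + t * v a) * Qstar s a)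
        (∑ a, v a * Qstar s a) 0 := by
      have heq : (fun t : ℝ => ∑ a, (πstar s a + t * v a) * Qstar s a)
          = fun t : ℝ => (∑ a, πstar s a * Qstar s a) + t * ∑ a, v a * Qstar s a := by
        funext t
        rw [Finset.mul_sum, ← Finset.sum_add_distrib]
        apply Finset.sum_congr rfl
        intros; ring
      rw [heq]
      simpa using ((hasDerivAt_id (0:ℝ)).mul_const (∑ a, v a * Qstar s a)).const_add
        (∑ a, πstar s a * Qstar s a)
    have hline : HasDerivAt (fun t : ℝ => πstar s + t • v) v 0 := by
      have h1 : HasDerivAt (fun t : ℝ => t • v) ((1:ℝ) • v) 0 :=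
        (hasDerivAt_id (0:ℝ)).smul_const v
      simpa using h1.const_add (πstar s)
    have hΩf : HasFDerivAt Ω (fderiv ℝ Ω (πstar s)) (πstar s + (0:ℝ) • v) := by
      simpa using (hΩd (πstar s)).hasFDerivAt
    have hd2 : HasDerivAt (fun t : ℝ => Ω (πstar s + t • v))
        (fderiv ℝ Ω (πstar s) v) 0 := hΩf.comp_hasDerivAt 0 hline
    have hdg : HasDerivAt g (∑ a, v a * Qstar s a - fderiv ℝ Ω (πstar s) v) 0 :=
      hd1.sub hd2
    have hzero : deriv g 0 = 0 := hlocmax.deriv_eq_zero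
    have hres : ∑ a, v a * Qstar s a - fderiv ℝ Ω (πstar s) v = 0 := by
      rw [← hdg.deriv, hzero]
    have : fderiv ℝ Ω (πstar s) v = ∑ a, v a * Qstar s a := by linarith
    rw [this]
    apply Finset.sum_congr rfl
    intro a _
    simp [hv]
  -- Step 2: per-state identity
  have hD : ∀ s, Ω (π s) - Ω (πstar s) - fderiv ℝ Ω (πstar s) (π s - πstar s)
      = δ s - γ * ∑ s', (∑ a, P s a s' * π s a) * δ s' := by
    intro s
    rw [key s]
    have hsub : ∑ a, (π s a - πstar s a) * Qstar s a
        = ∑ a, π s a * Qstar s a - ∑ a, πstar s a * Qstar s a := by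
      rw [← Finset.sum_sub_distrib]
      apply Finset.sum_congr rfl
      intros; ring
    have hsplit : ∑ a, π s a * Qstar s a
        = ∑ a, π s a * Qπ s a + γ * ∑ s', (∑ a, P s a s' * π s a) * δ s' := by
      have h1 : ∀ a, π s a * Qstar s a
          = π s a * Qπ s a + γ * (π s a * ∑ s', P s a s' * δ s') := by
        intro a
        have h2 : ∑ s', P s a s' * Vstar s'
            = ∑ s', P s a s' * Vπ s' + ∑ s', P s a s' * δ s' := by
          rw [← Finset.sum_add_distrib]
          apply Finset.sum_congr rfl
          intro s' _
          simp only [hδ]; ring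
        rw [hQstar, hQπ, h2]; ring
      rw [Finset.sum_congr rfl (fun a _ => h1 a), Finset.sum_add_distrib,
        ← Finset.mul_sum]
      congr 1
      congr 1
      have hswap : ∑ a, π s a * ∑ s', P s a s' * δ s'
          = ∑ s', (∑ a, P s a s' * π s a) * δ s' := by
        simp only [Finset.mul_sum, Finset.sum_mul]
        rw [Finset.sum_comm]
        apply Finset.sum_congr rfl
        intros; apply Finset.sum_congr rfl
        intros; ring
      exact hswap
    have hV1 : ∑ a, πstar s a * Qstar s a = Vstar s + Ω (πstar s) := by
      rw [hVstar s]; ring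
    have hV2 : ∑ a, π s a * Qπ s a = Vπ s + Ω (π s) := by
      rw [hVπ s]; ring
    rw [hsub, hsplit, hV1, hV2]
    simp only [hδ]; ring
  -- Step 3: sum over states, swap, and use the stationarity equation
  have hμ' : ∀ s', γ * ∑ s, (∑ a, P s a s' * π s a) * μ s
      = μ s' - (1 - γ) * ρ s' := by
    intro s'
    have := hμ s'
    linarith
  have hswap2 : ∑ s, μ s * (γ * ∑ s', (∑ a, P s a s' * π s a) * δ s')
      = ∑ s', (γ * ∑ s, (∑ a, P s a s' * π s a) * μ s) * δ s' := by
    simp only [Finset.mul_sum, Finset.sum_mul]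
    rw [Finset.sum_comm]
    apply Finset.sum_congr rfl
    intros; apply Finset.sum_congr rfl
    intros; apply Finset.sum_congr rfl
    intros; ring
  calc ∑ s, μ s * (Ω (π s) - Ω (πstar s) - fderiv ℝ Ω (πstar s) (π s - πstar s))
      = ∑ s, μ s * (δ s - γ * ∑ s', (∑ a, P s a s' * π s a) * δ s') := by
        apply Finset.sum_congr rfl
        intro s _
        rw [hD s]
    _ = ∑ s, μ s * δ s - ∑ s, μ s * (γ * ∑ s', (∑ a, P s a s' * π s a) * δ s') := by
        rw [← Finset.sum_sub_distrib]
        apply Finset.sum_congr rfl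
        intros; ring
    _ = ∑ s, μ s * δ s - ∑ s', (μ s' - (1 - γ) * ρ s') * δ s' := by
        rw [hswap2]
        congr 1
        apply Finset.sum_congr rfl
        intro s' _
        rw [hμ' s']
    _ = (1 - γ) * ∑ s, ρ s * δ s := by
        rw [← Finset.sum_sub_distrib, Finset.mul_sum]
        apply Finset.sum_congr rfl
        intros; ring
    _ = (1 - γ) * ∑ s, ρ s * (Vstar s - Vπ s) := by simp [hδ]
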